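/- Let R be a natural number and let u, v : ℝ² → ℝ be the polynomial functions u(x,y) = Σ_{r=0}^{R} Σ_{s=0}^{r} a_r^s x^{r-s} y^s and v(x,y) = Σ_{r=0}^{R} Σ_{s=0}^{r} A_r^s x^{r-s} y^s with real coefficients satisfying the Cauchy–Riemann equations (∂u/∂x = ∂v/∂y and ∂u/∂y = −∂v/∂x identically on ℝ²). If x, y : ℝ → ℝ are differentiable functions solving ẋ(t) = u(x(t), y(t)) and ẏ(t) = v(x(t), y(t)) for all t, then the complex-valued function z := x + i·y satisfies ż(t) = (a_0^0 + i·A_0^0) + Σ_{r=1}^{R} (a_r^0 − i·a_r^1/r) · z(t)^r for all t. -/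

import Mathlib

open Finset Complex

private lemma CR_extract (N : ℕ) (c : ℕ → ℕ → ℝ)
    (h : ∀ x y : ℝ, ∑ r ∈ range N, ∑ s ∈ range (r+1), c r s * x ^ (r - s) * y ^ s = 0) :
    ∀ r < N, ∀ s ≤ r, c r s = 0 := by
  classical
  set P : MvPolynomial (Fin 2) ℝ :=
    ∑ r ∈ range N, ∑ s ∈ range (r+1),
      MvPolynomial.monomial (Finsupp.single 0 (r - s) + Finsupp.single 1 s) (c r s) with hP
  have heval : ∀ x : Fin 2 → ℝ, MvPolynomial.eval x P = 0 := by
    intro x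
    have := h (x 0) (x 1)
    rw [hP]
    simp only [map_sum, MvPolynomial.eval_monomial]
    rw [← this]
    refine Finset.sum_congr rfl fun r _ => Finset.sum_congr rfl fun s _ => ?_
    rw [Finsupp.prod_add_index' (fun _ => pow_zero _) (fun _ b1 b2 => pow_add _ _ _)]
    rw [Finsupp.prod_single_index, Finsupp.prod_single_index]
    · ring
    · exact pow_zero _
    · exact pow_zero _
  have hPz : P = 0 := MvPolynomial.funext (by simpa using heval)
  intro r hr s hs
  have hc := congrArg (MvPolynomial.coeff (Finsupp.single 0 (r - s) + Finsupp.single 1 s)) hPz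
  rw [hP] at hc
  simp only [MvPolynomial.coeff_sum, MvPolynomial.coeff_monomial, MvPolynomial.coeff_zero] at hc
  rw [Finset.sum_eq_single r, Finset.sum_eq_single s] at hc
  · simpa using hc
  · intro s' hs' hne
    rw [if_neg]
    intro heq
    have h1 := DFunLike.congr_fun heq (1 : Fin 2)
    simp [Finsupp.single_apply] at h1
    exact hne h1
  · intro hrs
    simp at hrs
    omega
  · intro r' hr' hner
    rw [Finset.sum_eq_zero]
    intro s' hs'
    rw [if_neg]
    intro heq
    have h1 := DFunLike.congr_fun heq (1 : Fin 2)
    have h0 := DFunLike.congr_fun heq (0 : Fin 2)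
    simp [Finsupp.single_apply] at h1 h0
    simp at hr' hs'
    omega
  · intro hrr
    simp at hrr
    omega

private lemma CR_polyDerivX (R : ℕ) (a : ℕ → ℕ → ℝ) (x y : ℝ) :
    HasDerivAt (fun t => ∑ r ∈ range (R+1), ∑ s ∈ range (r+1), a r s * t ^ (r-s) * y ^ s)
      (∑ r ∈ range (R+1), ∑ s ∈ range (r+1),
        a r s * (((r-s : ℕ) : ℝ) * x ^ (r-s-1)) * y ^ s) x := by
  apply HasDerivAt.fun_sum; intro r _; apply HasDerivAt.fun_sum; intro s _
  exact ((hasDerivAt_pow (r-s) x).const_mul (a r s)).mul_const (y ^ s)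

private lemma CR_polyDerivY (R : ℕ) (a : ℕ → ℕ → ℝ) (x y : ℝ) :
    HasDerivAt (fun t => ∑ r ∈ range (R+1), ∑ s ∈ range (r+1), a r s * x ^ (r-s) * t ^ s)
      (∑ r ∈ range (R+1), ∑ s ∈ range (r+1),
        a r s * x ^ (r-s) * ((s : ℝ) * y ^ (s-1))) y := by
  apply HasDerivAt.fun_sum; intro r _; apply HasDerivAt.fun_sum; intro s _
  exact (hasDerivAt_pow s y).const_mul (a r s * x ^ (r-s))

private lemma CR_shift1 (R : ℕ) (g : ℕ → ℕ → ℝ) (hg : ∀ r, g r r = 0) :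
    ∑ r ∈ range (R+1), ∑ s ∈ range (r+1), g r s
      = ∑ r ∈ range R, ∑ s ∈ range (r+1), g (r+1) s := by
  rw [Finset.sum_range_succ' (fun r => ∑ s ∈ range (r+1), g r s)]
  simp [Finset.sum_range_succ, hg]

private lemma CR_shift2 (R : ℕ) (g : ℕ → ℕ → ℝ) (hg : ∀ r, g r 0 = 0) :
    ∑ r ∈ range (R+1), ∑ s ∈ range (r+1), g r s
      = ∑ r ∈ range R, ∑ s ∈ range (r+1), g (r+1) (s+1) := by
  have h : ∀ r, ∑ s ∈ range (r+1), g r s = ∑ s ∈ range r, g r (s+1) := by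
    intro r; rw [Finset.sum_range_succ' (fun s => g r s)]; simp [hg]
  simp only [h]
  rw [Finset.sum_range_succ' (fun r => ∑ s ∈ range r, g r (s+1))]
  simp

private lemma CR_keyInd (a A : ℕ → ℕ → ℝ) (r : ℕ)
    (h1 : ∀ s < r, a r s * ((r - s : ℕ) : ℝ) = A r (s+1) * (s+1))
    (h2 : ∀ s < r, a r (s+1) * (s+1) = -(A r s * ((r - s : ℕ) : ℝ))) :
    ∀ s ≤ r, (a r s : ℂ) + A r s * I = ((a r 0 : ℂ) + A r 0 * I) * (r.choose s) * I^s := by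
  intro s
  induction s with
  | zero => intro _; simp
  | succ s ih =>
    intro hs
    have hsr : s < r := by omega
    have IH := ih (by omega)
    have hstep : ((s:ℂ)+1) * ((a r (s+1) : ℂ) + A r (s+1) * I)
        = ((r - s : ℕ) : ℂ) * I * ((a r s : ℂ) + A r s * I) := by
      have e1 := h1 s hsr
      have e2 := h2 s hsr
      have e1' : (a r s : ℂ) * ((r - s : ℕ) : ℝ) = (A r (s+1) : ℂ) * ((s:ℂ)+1) := by
        exact_mod_cast congrArg (fun t : ℝ => (t : ℂ)) e1
      have e2' : (a r (s+1) : ℂ) * ((s:ℂ)+1) = -((A r s : ℂ) * ((r - s : ℕ) : ℝ)) := by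
        exact_mod_cast congrArg (fun t : ℝ => (t : ℂ)) e2
      push_cast at e1' e2' ⊢
      linear_combination e2' - I * e1' - (A r s : ℂ) * ((r - s : ℕ) : ℂ) * Complex.I_sq
    have hch : ((s:ℂ)+1) * (r.choose (s+1)) = ((r - s : ℕ) : ℂ) * (r.choose s) := by
      have h := Nat.choose_succ_right_eq r s
      have h' : ((r.choose (s+1) * (s+1) : ℕ) : ℂ) = ((r.choose s * (r - s) : ℕ) : ℂ) := by
        exact_mod_cast congrArg (fun n : ℕ => (n : ℂ)) h
      push_cast at h'
      linear_combination h'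
    have hne : ((s:ℂ)+1) ≠ 0 := by
      have h := Nat.cast_add_one_ne_zero (R := ℂ) s
      exact_mod_cast h
    apply mul_left_cancel₀ hne
    rw [hstep, IH]
    calc ((r - s : ℕ) : ℂ) * I * (((a r 0 : ℂ) + A r 0 * I) * (r.choose s) * I^s)
        = (((r - s : ℕ) : ℂ) * (r.choose s)) * (((a r 0 : ℂ) + A r 0 * I) * (I^s * I)) := by
          ring
      _ = ((s:ℂ)+1) * (((a r 0 : ℂ) + A r 0 * I) * (r.choose (s+1)) * I^(s+1)) := by
          rw [← hch, pow_succ]; ring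

/-- If `u`, `v` are bivariate real polynomials satisfying the
Cauchy–Riemann equations and `x`, `y` solve `ẋ = u(x,y)`, `ẏ = v(x,y)`, then
`z := x + i·y` satisfies `ż = (a₀⁰ + i·A₀⁰) + Σ_{r=1}^{R} (a_r⁰ − i·a_r¹/r)·z^r`. -/
theorem stmt_1 (R : ℕ) (a A : ℕ → ℕ → ℝ) (u v : ℝ → ℝ → ℝ)
    (hu : ∀ x y : ℝ, u x y =
      ∑ r ∈ Finset.range (R + 1), ∑ s ∈ Finset.range (r + 1),
        a r s * x ^ (r - s) * y ^ s)
    (hv : ∀ x y : ℝ, v x y =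
      ∑ r ∈ Finset.range (R + 1), ∑ s ∈ Finset.range (r + 1),
        A r s * x ^ (r - s) * y ^ s)
    (hCR1 : ∀ x y : ℝ, deriv (fun t => u t y) x = deriv (fun t => v x t) y)
    (hCR2 : ∀ x y : ℝ, deriv (fun t => u x t) y = - deriv (fun t => v t y) x)
    (x y : ℝ → ℝ)
    (hx : ∀ t : ℝ, HasDerivAt x (u (x t) (y t)) t)
    (hy : ∀ t : ℝ, HasDerivAt y (v (x t) (y t)) t) :
    ∀ t : ℝ, HasDerivAt (fun s : ℝ => (x s : ℂ) + (y s : ℂ) * Complex.I)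
      (((a 0 0 : ℂ) + (A 0 0 : ℂ) * Complex.I)
        + ∑ r ∈ Finset.Icc 1 R,
            ((a r 0 : ℂ) - Complex.I * (a r 1 : ℂ) / (r : ℂ))
              * ((x t : ℂ) + (y t : ℂ) * Complex.I) ^ r) t := by
  -- partial derivatives
  have hux : ∀ p q : ℝ, deriv (fun t => u t q) p
      = ∑ r ∈ range (R+1), ∑ s ∈ range (r+1),
          a r s * (((r-s : ℕ) : ℝ) * p ^ (r-s-1)) * q ^ s := by
    intro p q
    have hfun : (fun t => u t q)
        = fun t => ∑ r ∈ range (R+1), ∑ s ∈ range (r+1), a r s * t ^ (r-s) * q ^ s :=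
      funext fun t => hu t q
    rw [hfun]
    exact (CR_polyDerivX R a p q).deriv
  have hvx : ∀ p q : ℝ, deriv (fun t => v t q) p
      = ∑ r ∈ range (R+1), ∑ s ∈ range (r+1),
          A r s * (((r-s : ℕ) : ℝ) * p ^ (r-s-1)) * q ^ s := by
    intro p q
    have hfun : (fun t => v t q)
        = fun t => ∑ r ∈ range (R+1), ∑ s ∈ range (r+1), A r s * t ^ (r-s) * q ^ s :=
      funext fun t => hv t q
    rw [hfun]
    exact (CR_polyDerivX R A p q).deriv
  have huy : ∀ p q : ℝ, deriv (fun t => u p t) q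
      = ∑ r ∈ range (R+1), ∑ s ∈ range (r+1),
          a r s * p ^ (r-s) * ((s : ℝ) * q ^ (s-1)) := by
    intro p q
    have hfun : (fun t => u p t)
        = fun t => ∑ r ∈ range (R+1), ∑ s ∈ range (r+1), a r s * p ^ (r-s) * t ^ s :=
      funext fun t => hu p t
    rw [hfun]
    exact (CR_polyDerivY R a p q).deriv
  have hvy : ∀ p q : ℝ, deriv (fun t => v p t) q
      = ∑ r ∈ range (R+1), ∑ s ∈ range (r+1),
          A r s * p ^ (r-s) * ((s : ℝ) * q ^ (s-1)) := by
    intro p q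
    have hfun : (fun t => v p t)
        = fun t => ∑ r ∈ range (R+1), ∑ s ∈ range (r+1), A r s * p ^ (r-s) * t ^ s :=
      funext fun t => hv p t
    rw [hfun]
    exact (CR_polyDerivY R A p q).deriv
  -- CR equations as polynomial identities, reindexed
  have E1 : ∀ p q : ℝ, ∑ r ∈ range R, ∑ s ∈ range (r+1),
      (a (r+1) s * ((r+1-s : ℕ) : ℝ) - A (r+1) (s+1) * ((s+1 : ℕ) : ℝ))
        * p ^ (r-s) * q ^ s = 0 := by
    intro p q
    have e := hCR1 p q
    rw [hux, hvy] at e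
    have S1 := CR_shift1 R (fun r s => a r s * (((r-s : ℕ) : ℝ) * p ^ (r-s-1)) * q ^ s)
      (by intro r; simp)
    have S2 := CR_shift2 R (fun r s => A r s * p ^ (r-s) * ((s : ℝ) * q ^ (s-1)))
      (by intro r; simp)
    beta_reduce at S1 S2
    rw [S1, S2] at e
    rw [← sub_eq_zero] at e
    rw [← Finset.sum_sub_distrib] at e
    rw [← e]
    refine Finset.sum_congr rfl fun r hr => ?_
    rw [← Finset.sum_sub_distrib]
    refine Finset.sum_congr rfl fun s hs => ?_
    simp only [mem_range] at hr hs
    have h1 : r+1-s-1 = r-s := by omega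
    have h2 : r+1-(s+1) = r-s := by omega
    have h3 : s+1-1 = s := by omega
    rw [h1, h2, h3]
    push_cast
    ring
  have E2 : ∀ p q : ℝ, ∑ r ∈ range R, ∑ s ∈ range (r+1),
      (a (r+1) (s+1) * ((s+1 : ℕ) : ℝ) + A (r+1) s * ((r+1-s : ℕ) : ℝ))
        * p ^ (r-s) * q ^ s = 0 := by
    intro p q
    have e := hCR2 p q
    rw [huy, hvx] at e
    have S1 := CR_shift2 R (fun r s => a r s * p ^ (r-s) * ((s : ℝ) * q ^ (s-1)))
      (by intro r; simp)
    have S2 := CR_shift1 R (fun r s => A r s * (((r-s : ℕ) : ℝ) * p ^ (r-s-1)) * q ^ s)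
      (by intro r; simp)
    beta_reduce at S1 S2
    rw [S1, S2] at e
    rw [eq_neg_iff_add_eq_zero] at e
    rw [← Finset.sum_add_distrib] at e
    rw [← e]
    refine Finset.sum_congr rfl fun r hr => ?_
    rw [← Finset.sum_add_distrib]
    refine Finset.sum_congr rfl fun s hs => ?_
    simp only [mem_range] at hr hs
    have h1 : r+1-s-1 = r-s := by omega
    have h2 : r+1-(s+1) = r-s := by omega
    have h3 : s+1-1 = s := by omega
    rw [h1, h2, h3]
    push_cast
    ring
  have Rel1 := CR_extract R _ E1
  have Rel2 := CR_extract R _ E2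
  -- coefficient formula
  have hX : ∀ r ≤ R, ∀ s ≤ r,
      (a r s : ℂ) + A r s * I = ((a r 0 : ℂ) + A r 0 * I) * (r.choose s) * I^s := by
    intro r hrR
    apply CR_keyInd
    · intro s hsr
      obtain ⟨r', rfl⟩ : ∃ r', r = r'+1 := ⟨r-1, by omega⟩
      have := Rel1 r' (by omega) s (by omega)
      have h2 : ((s+1 : ℕ) : ℝ) = (s : ℝ) + 1 := by push_cast; ring
      rw [h2] at this
      linarith [this]
    · intro s hsr
      obtain ⟨r', rfl⟩ : ∃ r', r = r'+1 := ⟨r-1, by omega⟩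
      have := Rel2 r' (by omega) s (by omega)
      have h2 : ((s+1 : ℕ) : ℝ) = (s : ℝ) + 1 := by push_cast; ring
      rw [h2] at this
      linarith [this]
  -- value identity
  have hval : ∀ p q : ℝ, (u p q : ℂ) + (v p q : ℂ) * I
      = (((a 0 0 : ℂ) + (A 0 0 : ℂ) * I)
          + ∑ r ∈ Finset.Icc 1 R,
              ((a r 0 : ℂ) - I * (a r 1 : ℂ) / (r : ℂ)) * ((p : ℂ) + (q : ℂ) * I) ^ r) := by
    intro p q
    have step1 : (u p q : ℂ) + (v p q : ℂ) * I
        = ∑ r ∈ range (R+1), ∑ s ∈ range (r+1),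
            ((a r s : ℂ) + A r s * I) * (p:ℂ) ^ (r-s) * (q:ℂ) ^ s := by
      rw [hu p q, hv p q]
      push_cast
      rw [Finset.sum_mul, ← Finset.sum_add_distrib]
      refine Finset.sum_congr rfl fun r _ => ?_
      rw [Finset.sum_mul, ← Finset.sum_add_distrib]
      refine Finset.sum_congr rfl fun s _ => ?_
      ring
    have step2 : ∑ r ∈ range (R+1), ∑ s ∈ range (r+1),
            ((a r s : ℂ) + A r s * I) * (p:ℂ) ^ (r-s) * (q:ℂ) ^ s
        = ∑ r ∈ range (R+1),
            ((a r 0 : ℂ) + A r 0 * I) * ((p:ℂ) + (q:ℂ) * I) ^ r := by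
      refine Finset.sum_congr rfl fun r hr => ?_
      simp only [mem_range] at hr
      have : ((p:ℂ) + (q:ℂ) * I) ^ r = ((q:ℂ) * I + (p:ℂ)) ^ r := by rw [add_comm]
      rw [this, add_pow, Finset.mul_sum]
      refine Finset.sum_congr rfl fun s hs => ?_
      simp only [mem_range] at hs
      rw [hX r (by omega) s (by omega)]
      rw [mul_pow]
      ring
    rw [step1, step2]
    have hsplit : range (R+1) = insert 0 (Finset.Icc 1 R) := by
      ext n; simp [Finset.mem_range, Finset.mem_Icc, Finset.mem_insert]; omega
    rw [hsplit, Finset.sum_insert (by simp)]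
    simp only [pow_zero, mul_one]
    congr 1
    refine Finset.sum_congr rfl fun r hr => ?_
    simp only [Finset.mem_Icc] at hr
    congr 1
    -- (a r 0) + A r 0 * I = a r 0 - I * a r 1 / r
    obtain ⟨r', rfl⟩ : ∃ r', r = r'+1 := ⟨r-1, by omega⟩
    have h2 := Rel2 r' (by omega) 0 (by omega)
    simp only [Nat.sub_zero] at h2
    have h2' : a (r'+1) 1 + A (r'+1) 0 * ((r'+1 : ℕ) : ℝ) = 0 := by push_cast at h2 ⊢; linarith
    have h2c : (a (r'+1) 1 : ℂ) + (A (r'+1) 0 : ℂ) * ((r'+1 : ℕ) : ℂ) = 0 := by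
      exact_mod_cast congrArg (fun t : ℝ => (t : ℂ)) h2'
    have hrne : ((r'+1 : ℕ) : ℂ) ≠ 0 := Nat.cast_ne_zero.mpr (by omega)
    have hA : (A (r'+1) 0 : ℂ) = -(a (r'+1) 1 : ℂ) / ((r'+1 : ℕ) : ℂ) := by
      rw [eq_div_iff hrne]
      linear_combination h2c
    rw [hA]
    ring
  intro t
  have H := ((hx t).ofReal_comp).add (((hy t).ofReal_comp).mul_const I)
  rw [hval (x t) (y t)] at H
  exact H
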